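/- Let γ > e, m > 0 and c_u > 0. Let (c_i), (v_i), (a_i), indexed by a finite set I, satisfy c_i > 0, v_i > 0 and 0 ≤ a_i ≤ v_i, let A := ∑_{i∈I} a_i, and assume A ≥ m and γ·v_i/c_i ≤ A/c_u for every i with a_i > 0. Then, with the convention 0·ln(c/0) := 0, one has A·ln(c_u/A) + ∑_{i∈I} (v_i − a_i)·ln(c_i/(v_i − a_i)) − ∑_{i∈I} v_i·ln(c_i/v_i) ≤ −m·ln(γ/e). -/

import Mathlib

open Finset

/-- Shannon entropy potential decrease during a `γ`-move: with `A := ∑ a_i ≥ m > 0` and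
`γ·v_i/c_i ≤ A/c_u` whenever `a_i > 0`,
`A·ln(c_u/A) + ∑ (v_i − a_i)·ln(c_i/(v_i − a_i)) − ∑ v_i·ln(c_i/v_i) ≤ −m·ln(γ/e)`
(with the convention `0·ln(c/0) := 0`, which in Lean holds automatically since the factor
in front of the logarithm is `0`). -/
theorem shannon_gamma_move_decrease (γ m cu : ℝ) (hγ : Real.exp 1 < γ) (hm : 0 < m)
    (hcu : 0 < cu)
    {ι : Type*} (I : Finset ι) (c v a : ι → ℝ)
    (hc : ∀ i ∈ I, 0 < c i) (hv : ∀ i ∈ I, 0 < v i)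
    (ha : ∀ i ∈ I, 0 ≤ a i ∧ a i ≤ v i)
    (hA : m ≤ ∑ i ∈ I, a i)
    (hmove : ∀ i ∈ I, 0 < a i → γ * v i / c i ≤ (∑ i' ∈ I, a i') / cu) :
    (∑ i ∈ I, a i) * Real.log (cu / ∑ i ∈ I, a i)
        + ∑ i ∈ I, (v i - a i) * Real.log (c i / (v i - a i))
        - ∑ i ∈ I, v i * Real.log (c i / v i)
      ≤ -m * Real.log (γ / Real.exp 1) := by
  set A := ∑ i ∈ I, a i with hAdef
  have hApos : 0 < A := lt_of_lt_of_le hm hA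
  have hγ0 : 0 < γ := lt_trans (Real.exp_pos 1) hγ
  have key : ∀ i ∈ I, (v i - a i) * Real.log (c i / (v i - a i))
      - v i * Real.log (c i / v i) ≤ a i * (1 - Real.log (c i / v i)) := by
    intro i hi
    obtain ⟨ha0, hav⟩ := ha i hi
    have hvi := hv i hi; have hci := hc i hi
    rcases eq_or_lt_of_le hav with h | h
    · rw [← h]
      simp only [sub_self, zero_mul]
      nlinarith [ha0, h]
    · have hva : 0 < v i - a i := sub_pos.mpr h
      have hlog : Real.log (v i / (v i - a i)) ≤ v i / (v i - a i) - 1 :=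
        Real.log_le_sub_one_of_pos (by positivity)
      have e1 : Real.log (c i / (v i - a i))
          = Real.log (c i / v i) + Real.log (v i / (v i - a i)) := by
        rw [← Real.log_mul (by positivity) (by positivity)]
        congr 1; field_simp
      rw [e1]
      have h2 : (v i - a i) * Real.log (v i / (v i - a i)) ≤ a i := by
        calc (v i - a i) * Real.log (v i / (v i - a i))
            ≤ (v i - a i) * (v i / (v i - a i) - 1) :=
              mul_le_mul_of_nonneg_left hlog hva.le
          _ = a i := by field_simp; ring
      nlinarith [h2]
  have hsum : ∑ i ∈ I, (v i - a i) * Real.log (c i / (v i - a i))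
      - ∑ i ∈ I, v i * Real.log (c i / v i)
      ≤ ∑ i ∈ I, a i * (1 - Real.log (c i / v i)) := by
    rw [← Finset.sum_sub_distrib]
    exact Finset.sum_le_sum key
  have hB : (0:ℝ) < γ * cu / A := by positivity
  have hsum2 : ∑ i ∈ I, a i * (1 - Real.log (c i / v i))
      ≤ ∑ i ∈ I, a i * (1 - Real.log (γ * cu / A)) := by
    apply Finset.sum_le_sum
    intro i hi
    rcases eq_or_lt_of_le (ha i hi).1 with h | h
    · rw [← h]; simp
    · have hmi := hmove i hi h
      have hvi := hv i hi; have hci := hc i hi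
      have hle : γ * cu / A ≤ c i / v i := by
        rw [div_le_div_iff₀ (by positivity) hvi]
        rw [div_le_div_iff₀ (by positivity) hcu] at hmi
        nlinarith
      have hlog := Real.log_le_log hB hle
      nlinarith [h]
  have hfinal : ∑ i ∈ I, a i * (1 - Real.log (γ * cu / A))
      = A * (1 - Real.log (γ * cu / A)) := by
    rw [hAdef, ← Finset.sum_mul]
  have hlogeq : Real.log (cu / A) + (1 - Real.log (γ * cu / A)) = 1 - Real.log γ := by
    rw [Real.log_div (ne_of_gt hcu) (ne_of_gt hApos),
      Real.log_div (by positivity) (ne_of_gt hApos),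
      Real.log_mul (ne_of_gt hγ0) (ne_of_gt hcu)]
    ring
  have hγe : Real.log (γ / Real.exp 1) = Real.log γ - 1 := by
    rw [Real.log_div (ne_of_gt hγ0) (Real.exp_ne_zero 1), Real.log_exp]
  have hγe_pos : 0 < Real.log γ - 1 := by
    have h1 : Real.log (Real.exp 1) < Real.log γ := Real.log_lt_log (Real.exp_pos 1) hγ
    simpa using h1
  have hmain : A * Real.log (cu / A)
        + ∑ i ∈ I, (v i - a i) * Real.log (c i / (v i - a i))
        - ∑ i ∈ I, v i * Real.log (c i / v i)
      ≤ A * Real.log (cu / A) + A * (1 - Real.log (γ * cu / A)) := by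
    have := hsum.trans hsum2
    rw [hfinal] at this
    linarith
  have heq : A * Real.log (cu / A) + A * (1 - Real.log (γ * cu / A))
      = A * (1 - Real.log γ) := by
    rw [← mul_add, hlogeq]
  rw [hγe]
  calc A * Real.log (cu / A)
        + ∑ i ∈ I, (v i - a i) * Real.log (c i / (v i - a i))
        - ∑ i ∈ I, v i * Real.log (c i / v i)
      ≤ A * (1 - Real.log γ) := by rw [← heq]; exact hmain
    _ ≤ -m * (Real.log γ - 1) := by nlinarith
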